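/- Tensor trace minimization (Theorem 3.4): let A ∈ ℝ^{m×m×p} be f-symmetric and f-positive-semidefinite. Then min over V ∈ ℝ^{m×d×p} with V^T * V = I of Trace_f(V^T * A * V) equals (1/p) Σ_{i=1}^p Σ_{j=1}^d λ̃_j(Â_i), where λ̃_1(Â_i) ≤ … ≤ λ̃_m(Â_i) are the eigenvalues of the Fourier-domain frontal slice Â_i in increasing order. -/

import Mathlib

open Complex Matrix BigOperators
open scoped Kronecker ComplexOrder

/-- primitive root ω = exp(-2πi/p) used in the DFT. -/
noncomputable def tOmega (p : ℕ) : ℂ := Complex.exp (-(2 * Real.pi * Complex.I) / p)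

/-- unitary DFT matrix of order ℓ, (F)_{k,j} = ω^{k j}/√ℓ (0-based indices). -/
noncomputable def dftMatrix (ℓ : ℕ) : Matrix (Fin ℓ) (Fin ℓ) ℂ :=
  Matrix.of fun k j => (tOmega ℓ) ^ ((k : ℕ) * (j : ℕ)) / (Real.sqrt ℓ : ℂ)

/-- unnormalized mode-3 DFT of a real third-order tensor given by its frontal slices. -/
noncomputable def dft3 {m n p : ℕ} (A : Fin p → Matrix (Fin m) (Fin n) ℝ) :
    Fin p → Matrix (Fin m) (Fin n) ℂ :=
  fun k => ∑ l : Fin p, (tOmega p) ^ ((k : ℕ) * (l : ℕ)) • (A l).map (fun x => (x : ℂ))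

/-- t-product of third-order tensors (circular convolution of frontal slices),
    equivalently MatVec⁻¹[Bcirc(A)·MatVec(B)]. -/
def tProd {m l n p : ℕ} (A : Fin p → Matrix (Fin m) (Fin l) ℝ)
    (B : Fin p → Matrix (Fin l) (Fin n) ℝ) : Fin p → Matrix (Fin m) (Fin n) ℝ :=
  fun k => ∑ j : Fin p, A (k - j) * B j

/-- t-transpose: transpose each frontal slice and reverse the order of slices 2,…,p. -/
def tTrans {m n p : ℕ} (A : Fin p → Matrix (Fin m) (Fin n) ℝ) :
    Fin p → Matrix (Fin n) (Fin m) ℝ :=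
  fun k => (A (-k))ᵀ

/-- identity tensor: first frontal slice is I, the others vanish. -/
def tId (m p : ℕ) : Fin p → Matrix (Fin m) (Fin m) ℝ :=
  fun k => if (k : ℕ) = 0 then 1 else 0

/-- f-trace: average of the traces of the Fourier-domain frontal slices. -/
noncomputable def tTraceF {m p : ℕ} (A : Fin p → Matrix (Fin m) (Fin m) ℝ) : ℂ :=
  (1 / (p : ℂ)) * ∑ i : Fin p, (dft3 A i).trace

/-- squared Frobenius norm of a tensor. -/
def frob2 {m n p : ℕ} (A : Fin p → Matrix (Fin m) (Fin n) ℝ) : ℝ :=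
  ∑ k : Fin p, ∑ r : Fin m, ∑ c : Fin n, (A k r c) ^ 2

/-- Frobenius inner product of tensors. -/
def finner {m n p : ℕ} (A B : Fin p → Matrix (Fin m) (Fin n) ℝ) : ℝ :=
  ∑ k : Fin p, ∑ r : Fin m, ∑ c : Fin n, A k r c * B k r c

/-- block circulant matrix of a tensor (complex-valued entries). -/
noncomputable def bcirc {m n p : ℕ} (A : Fin p → Matrix (Fin m) (Fin n) ℝ) :
    Matrix (Fin p × Fin m) (Fin p × Fin n) ℂ :=
  Matrix.of fun x y => (A (x.1 - y.1) x.2 y.2 : ℂ)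



lemma tOmega_prim {p : ℕ} (hp : p ≠ 0) : IsPrimitiveRoot (tOmega p) p := by
  have : tOmega p = (Complex.exp (2 * Real.pi * Complex.I / p))⁻¹ := by
    rw [tOmega, neg_div, Complex.exp_neg]
  rw [this]
  exact (Complex.isPrimitiveRoot_exp p hp).inv

lemma tOmega_pow_p {p : ℕ} (hp : p ≠ 0) : (tOmega p) ^ p = 1 :=
  (tOmega_prim hp).pow_eq_one

lemma tOmega_pow_mod {p : ℕ} (hp : p ≠ 0) {a b : ℕ} (h : a % p = b % p) :
    tOmega p ^ a = tOmega p ^ b := by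
  conv_lhs => rw [← Nat.div_add_mod a p]
  conv_rhs => rw [← Nat.div_add_mod b p]
  rw [pow_add, pow_add, pow_mul, pow_mul, tOmega_pow_p hp, one_pow, one_pow, h]

lemma conj_tOmega_pow {p : ℕ} (n : ℕ) :
    (starRingEnd ℂ) (tOmega p ^ n) = (tOmega p ^ n)⁻¹ := by
  rw [map_pow, ← inv_pow]
  congr 1
  rw [tOmega, ← Complex.exp_conj, ← Complex.exp_neg]
  congr 1
  rw [map_div₀, map_neg, _root_.map_mul, _root_.map_mul]
  simp [Complex.conj_I, map_ofNat]
  ring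

lemma tOmega_geom {p : ℕ} (hp : p ≠ 0) (a : Fin p) :
    ∑ k : Fin p, (tOmega p) ^ ((k : ℕ) * (a : ℕ)) = if (a : ℕ) = 0 then (p : ℂ) else 0 := by
  have : ∀ k : Fin p, (tOmega p) ^ ((k : ℕ) * (a : ℕ)) = (tOmega p ^ (a : ℕ)) ^ (k : ℕ) := by
    intro k; rw [← pow_mul, Nat.mul_comm]
  simp_rw [this]
  rw [Fin.sum_univ_eq_sum_range (fun k => (tOmega p ^ (a : ℕ)) ^ k)]
  split_ifs with h
  · simp [h]
  · have hne : tOmega p ^ (a : ℕ) ≠ 1 := by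
      intro hone
      have := ((tOmega_prim hp).pow_eq_one_iff_dvd (a : ℕ)).mp hone
      have := Nat.le_of_dvd (Nat.pos_of_ne_zero h) this
      omega
    rw [geom_sum_eq hne]
    rw [← pow_mul, Nat.mul_comm, pow_mul, tOmega_pow_p hp, one_pow]
    simp





lemma tOmega_fin_add {p : ℕ} (hp : p ≠ 0) (n : ℕ) (x y : Fin p) :
    tOmega p ^ (n * ((x + y : Fin p) : ℕ)) = tOmega p ^ (n * (x : ℕ)) * tOmega p ^ (n * (y : ℕ)) := by
  rw [← pow_add]
  apply tOmega_pow_mod hp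
  have h1 : ((x + y : Fin p) : ℕ) % p = ((x : ℕ) + (y : ℕ)) % p := by
    rw [Fin.add_def]; simp [Nat.mod_mod_of_dvd]
  have : (n * ((x + y : Fin p) : ℕ)) % p = (n * ((x : ℕ) + (y : ℕ))) % p :=
    (Nat.ModEq.mul_left n (h1 : _ ≡ _ [MOD p]))
  rw [this, Nat.mul_add]

lemma conj_tOmega_fin {p : ℕ} (hp : p ≠ 0) (n : ℕ) (x : Fin p) :
    (starRingEnd ℂ) (tOmega p ^ (n * (x : ℕ))) = tOmega p ^ (n * ((-x : Fin p) : ℕ)) := by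
  rw [conj_tOmega_pow]
  refine inv_eq_of_mul_eq_one_right ?_
  haveI := NeZero.mk hp
  rw [← tOmega_fin_add hp n x (-x)]
  simp

lemma dft3_tProd {m l n p : ℕ} (hp : p ≠ 0) (A : Fin p → Matrix (Fin m) (Fin l) ℝ)
    (B : Fin p → Matrix (Fin l) (Fin n) ℝ) (k : Fin p) :
    dft3 (tProd A B) k = dft3 A k * dft3 B k := by
  haveI := NeZero.mk hp
  have key : ∀ j s : Fin p, tOmega p ^ ((k:ℕ)*((s:Fin p):ℕ)) =
      tOmega p ^ ((k:ℕ)*(((s - j : Fin p)):ℕ)) * tOmega p ^ ((k:ℕ)*(j:ℕ)) := by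
    intro j s
    rw [← tOmega_fin_add hp, sub_add_cancel]
  ext r c
  simp only [dft3, tProd, Matrix.sum_apply, Matrix.mul_apply, Matrix.smul_apply,
    Matrix.map_apply, smul_eq_mul]
  push_cast
  trans (∑ j : Fin p, ∑ s : Fin p, ∑ b : Fin l,
      tOmega p ^ ((k:ℕ)*(s:ℕ)) * (((A (s - j) r b : ℝ):ℂ) * ((B j b c : ℝ):ℂ)))
  · rw [Finset.sum_comm]
    refine Finset.sum_congr rfl fun s _ => ?_
    rw [Finset.mul_sum]
    refine Finset.sum_congr rfl fun j _ => ?_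
    rw [Finset.mul_sum]
  · rw [show (∑ b : Fin l, (∑ s : Fin p, tOmega p ^ ((k:ℕ)*(s:ℕ)) * ((A s r b : ℝ):ℂ)) *
        (∑ j : Fin p, tOmega p ^ ((k:ℕ)*(j:ℕ)) * ((B j b c : ℝ):ℂ))) =
        ∑ j : Fin p, ∑ s : Fin p, ∑ b : Fin l,
          (tOmega p ^ ((k:ℕ)*(s:ℕ)) * ((A s r b : ℝ):ℂ)) *
          (tOmega p ^ ((k:ℕ)*(j:ℕ)) * ((B j b c : ℝ):ℂ)) from by
      simp_rw [Finset.sum_mul_sum]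
      rw [Finset.sum_comm]
      rw [show (∑ s : Fin p, ∑ b : Fin l, ∑ j : Fin p,
          (tOmega p ^ ((k:ℕ)*(s:ℕ)) * ((A s r b : ℝ):ℂ)) *
          (tOmega p ^ ((k:ℕ)*(j:ℕ)) * ((B j b c : ℝ):ℂ))) =
          ∑ s : Fin p, ∑ j : Fin p, ∑ b : Fin l,
          (tOmega p ^ ((k:ℕ)*(s:ℕ)) * ((A s r b : ℝ):ℂ)) *
          (tOmega p ^ ((k:ℕ)*(j:ℕ)) * ((B j b c : ℝ):ℂ)) from
        Finset.sum_congr rfl fun s _ => Finset.sum_comm]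
      rw [Finset.sum_comm]]
    refine Finset.sum_congr rfl fun j _ => ?_
    rw [← Equiv.sum_comp (Equiv.subRight j) (fun s => ∑ b : Fin l,
      (tOmega p ^ ((k:ℕ)*((s:Fin p):ℕ)) * ((A s r b : ℝ):ℂ)) *
      (tOmega p ^ ((k:ℕ)*(j:ℕ)) * ((B j b c : ℝ):ℂ)))]
    refine Finset.sum_congr rfl fun s _ => ?_
    refine Finset.sum_congr rfl fun b _ => ?_
    simp only [Equiv.subRight_apply]
    rw [key j s]
    ring

lemma dft3_tTrans {m n p : ℕ} (hp : p ≠ 0) (V : Fin p → Matrix (Fin m) (Fin n) ℝ) (k : Fin p) :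
    dft3 (tTrans V) k = (dft3 V k)ᴴ := by
  ext r c
  simp only [dft3, tTrans, Matrix.sum_apply, Matrix.smul_apply, Matrix.map_apply,
    Matrix.conjTranspose_apply, Matrix.transpose_apply, smul_eq_mul, star_sum, star_mul',
    RCLike.star_def, Complex.conj_ofReal]
  rw [← Equiv.sum_comp (Equiv.neg (Fin p)) (fun l => tOmega p ^ ((k:ℕ)*((l : Fin p):ℕ)) * ((V (-l) c r : ℝ) : ℂ))]
  refine Finset.sum_congr rfl fun l _ => ?_
  simp only [Equiv.neg_apply, neg_neg]
  rw [conj_tOmega_fin hp]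

lemma dft3_tId {d p : ℕ} (hp : p ≠ 0) (k : Fin p) : dft3 (tId d p) k = 1 := by
  haveI := NeZero.mk hp
  rw [dft3]
  rw [Finset.sum_eq_single (0 : Fin p)]
  · simp [tId, Matrix.map_one]
  · intro b _ hb
    have : (b : ℕ) ≠ 0 := fun h => hb (Fin.ext h)
    simp [tId, this]
  · simp

lemma conj_tOmega_fin' {p : ℕ} (hp : p ≠ 0) (n : ℕ) (x : Fin p) :
    (starRingEnd ℂ) (tOmega p ^ ((x : ℕ) * n)) = tOmega p ^ (((-x : Fin p) : ℕ) * n) := by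
  rw [Nat.mul_comm, conj_tOmega_fin hp, Nat.mul_comm]

lemma tOmega_fin_add' {p : ℕ} (hp : p ≠ 0) (n : ℕ) (x y : Fin p) :
    tOmega p ^ (((x + y : Fin p) : ℕ) * n) = tOmega p ^ ((x : ℕ) * n) * tOmega p ^ ((y : ℕ) * n) := by
  rw [Nat.mul_comm, tOmega_fin_add hp, Nat.mul_comm (n := n), Nat.mul_comm (n := n)]

lemma dft3_inverse {m n p : ℕ} (hp : p ≠ 0) (W : Fin p → Matrix (Fin m) (Fin n) ℂ)
    (hconj : ∀ k, W (-k) = (W k).map (starRingEnd ℂ)) (j : Fin p) :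
    dft3 (fun l => Matrix.of fun r c =>
      ((p : ℂ)⁻¹ * ∑ k : Fin p, (starRingEnd ℂ) (tOmega p ^ ((k:ℕ)*(l:ℕ))) * W k r c).re) j
      = W j := by
  haveI := NeZero.mk hp
  ext r c
  have hreal : ∀ l : Fin p,
      ((((p : ℂ)⁻¹ * ∑ k : Fin p, (starRingEnd ℂ) (tOmega p ^ ((k:ℕ)*(l:ℕ))) * W k r c).re : ℝ) : ℂ)
      = (p : ℂ)⁻¹ * ∑ k : Fin p, (starRingEnd ℂ) (tOmega p ^ ((k:ℕ)*(l:ℕ))) * W k r c := by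
    intro l
    rw [← Complex.conj_eq_iff_re, _root_.map_mul, map_sum]
    congr 1
    · simp
    · rw [← Equiv.sum_comp (Equiv.neg (Fin p)) (fun k => (starRingEnd ℂ)
        (tOmega p ^ (((k : Fin p):ℕ)*(l:ℕ))) * W k r c)]
      refine Finset.sum_congr rfl fun k _ => ?_
      simp only [Equiv.neg_apply]
      rw [_root_.map_mul, Complex.conj_conj, conj_tOmega_fin' hp (l:ℕ) (-k), neg_neg,
        hconj, Matrix.map_apply]
  simp only [dft3, Matrix.sum_apply, Matrix.smul_apply, Matrix.map_apply, Matrix.of_apply,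
    smul_eq_mul]
  simp_rw [hreal]
  trans (∑ l : Fin p, ∑ k : Fin p, tOmega p ^ ((j:ℕ)*(l:ℕ)) *
      ((p:ℂ)⁻¹ * ((starRingEnd ℂ) (tOmega p ^ ((k:ℕ)*(l:ℕ))) * W k r c)))
  · exact Finset.sum_congr rfl fun l _ => by rw [Finset.mul_sum, Finset.mul_sum]
  rw [Finset.sum_comm]
  have hsum : ∀ k : Fin p, (∑ l : Fin p, tOmega p ^ ((l:ℕ) * (((j - k : Fin p)):ℕ)))
      = if k = j then (p:ℂ) else 0 := by
    intro k
    rw [tOmega_geom hp]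
    have : ((j - k : Fin p) : ℕ) = 0 ↔ k = j := by
      rw [← Fin.val_zero p, Fin.val_eq_val, sub_eq_zero, eq_comm]
    simp only [this]
  trans (∑ k : Fin p, (p:ℂ)⁻¹ * (∑ l : Fin p, tOmega p ^ ((l:ℕ) * (((j - k : Fin p)):ℕ))) * W k r c)
  · refine Finset.sum_congr rfl fun k _ => ?_
    rw [Finset.mul_sum, Finset.sum_mul]
    refine Finset.sum_congr rfl fun l _ => ?_
    have h2 : tOmega p ^ ((j:ℕ)*(l:ℕ)) * tOmega p ^ (((-k:Fin p):ℕ)*(l:ℕ))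
        = tOmega p ^ ((l:ℕ)*((j-k:Fin p):ℕ)) := by
      rw [← tOmega_fin_add' hp, ← sub_eq_add_neg, Nat.mul_comm]
    rw [conj_tOmega_fin' hp (l:ℕ) k, ← h2]
    ring
  simp_rw [hsum]
  rw [Finset.sum_eq_single j]
  · rw [if_pos rfl]
    field_simp
  · intro b _ hb
    rw [if_neg hb, mul_zero, zero_mul]
  · intro h
    exact absurd (Finset.mem_univ j) h

section PolyPart
open Polynomial

lemma det_aux {m : ℕ} (v : Fin m → ℂ) (U : Matrix (Fin m) (Fin m) ℂ) (hU : Uᴴ * U = 1) :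
    Matrix.det ((Polynomial.X : ℂ[X]) • (1 : Matrix (Fin m) (Fin m) ℂ[X])
      - (U * Matrix.diagonal v * Uᴴ).map (⇑(Polynomial.C : ℂ →+* ℂ[X])))
      = ∏ j : Fin m, (Polynomial.X - Polynomial.C (v j)) := by
  have hU' : U * Uᴴ = 1 := mul_eq_one_comm.mp hU
  have hone : (U.map (⇑(C : ℂ →+* ℂ[X]))) * ((Uᴴ).map (⇑(C : ℂ →+* ℂ[X]))) = 1 := by
    rw [← Matrix.map_mul, hU', Matrix.map_one _ (map_zero C) (map_one C)]
  have hid : (Polynomial.X : ℂ[X]) • (1 : Matrix (Fin m) (Fin m) ℂ[X])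
      - (U * Matrix.diagonal v * Uᴴ).map (⇑(C : ℂ →+* ℂ[X]))
      = U.map (⇑(C : ℂ →+* ℂ[X])) *
        ((Polynomial.X : ℂ[X]) • (1 : Matrix (Fin m) (Fin m) ℂ[X])
          - (Matrix.diagonal v).map (⇑(C : ℂ →+* ℂ[X]))) * (Uᴴ).map (⇑(C : ℂ →+* ℂ[X])) := by
    rw [Matrix.map_mul, Matrix.map_mul, Matrix.mul_sub, Matrix.sub_mul]
    congr 1
    rw [Matrix.mul_smul, Matrix.mul_one, Matrix.smul_mul, hone]
  rw [hid, Matrix.det_mul, Matrix.det_mul, mul_right_comm, ← Matrix.det_mul, hone,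
    Matrix.det_one, one_mul]
  have hdiag : (Polynomial.X : ℂ[X]) • (1 : Matrix (Fin m) (Fin m) ℂ[X])
      - (Matrix.diagonal v).map (⇑(C : ℂ →+* ℂ[X]))
      = Matrix.diagonal (fun j => Polynomial.X - Polynomial.C (v j)) := by
    ext i j
    by_cases h : i = j <;>
      simp [Matrix.smul_apply, Matrix.one_apply, Matrix.diagonal_apply, Matrix.map_apply, h,
        smul_eq_mul]
  rw [hdiag, Matrix.det_diagonal]

lemma multiset_eq_of_unitary_diag {m : ℕ} (v w : Fin m → ℂ)
    (U₁ U₂ : Matrix (Fin m) (Fin m) ℂ) (h₁ : U₁ᴴ * U₁ = 1) (h₂ : U₂ᴴ * U₂ = 1)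
    (h : U₁ * Matrix.diagonal v * U₁ᴴ = U₂ * Matrix.diagonal w * U₂ᴴ) :
    Multiset.map v Finset.univ.val = Multiset.map w Finset.univ.val := by
  have e1 := det_aux v U₁ h₁
  have e2 := det_aux w U₂ h₂
  rw [h] at e1
  have hprod : (∏ j : Fin m, (Polynomial.X - Polynomial.C (v j)))
      = ∏ j : Fin m, (Polynomial.X - Polynomial.C (w j)) := e1.symm.trans e2
  have hv : (∏ j : Fin m, (Polynomial.X - Polynomial.C (v j)))
      = ((Finset.univ.val.map v).map (fun a => Polynomial.X - Polynomial.C a)).prod := by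
    rw [Multiset.map_map]; rfl
  have hw : (∏ j : Fin m, (Polynomial.X - Polynomial.C (w j)))
      = ((Finset.univ.val.map w).map (fun a => Polynomial.X - Polynomial.C a)).prod := by
    rw [Multiset.map_map]; rfl
  have := congrArg Polynomial.roots hprod
  rwa [hv, hw, Polynomial.roots_multiset_prod_X_sub_C,
    Polynomial.roots_multiset_prod_X_sub_C] at this

lemma mono_eq_of_multiset {m : ℕ} (f g : Fin m → ℝ) (hf : Monotone f) (hg : Monotone g)
    (h : Multiset.map f Finset.univ.val = Multiset.map g Finset.univ.val) : f = g := by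
  apply List.ofFn_injective
  refine List.Perm.eq_of_sortedLE (List.sortedLE_ofFn_iff.mpr hf)
    (List.sortedLE_ofFn_iff.mpr hg) ?_
  rw [List.ofFn_eq_map, List.ofFn_eq_map, ← Multiset.coe_eq_coe, ← Multiset.map_coe,
    ← Multiset.map_coe]
  simpa [Fin.univ_def] using h

lemma mono_eq_of_unitary_diag {m : ℕ} (f g : Fin m → ℝ) (hf : Monotone f) (hg : Monotone g)
    (U₁ U₂ : Matrix (Fin m) (Fin m) ℂ) (h₁ : U₁ᴴ * U₁ = 1) (h₂ : U₂ᴴ * U₂ = 1)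
    (h : U₁ * Matrix.diagonal (fun j => (f j : ℂ)) * U₁ᴴ
      = U₂ * Matrix.diagonal (fun j => (g j : ℂ)) * U₂ᴴ) : f = g := by
  have hm := multiset_eq_of_unitary_diag _ _ U₁ U₂ h₁ h₂ h
  refine mono_eq_of_multiset f g hf hg ?_
  apply Multiset.map_injective Complex.ofReal_injective
  rwa [Multiset.map_map, Multiset.map_map]

end PolyPart

noncomputable def selE (𝕜 : Type*) [RCLike 𝕜] {m d : ℕ} (hd : d ≤ m) : Matrix (Fin m) (Fin d) 𝕜 :=
  Matrix.of fun r c => if r = Fin.castLE hd c then 1 else 0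

lemma selE_orth (𝕜 : Type*) [RCLike 𝕜] {m d : ℕ} (hd : d ≤ m) :
    (selE 𝕜 hd)ᴴ * selE 𝕜 hd = 1 := by
  ext a b
  simp only [Matrix.mul_apply, Matrix.conjTranspose_apply, selE, Matrix.of_apply, apply_ite (star : 𝕜 → 𝕜),
    star_one, star_zero, ite_mul, one_mul, zero_mul]
  rw [Finset.sum_ite_eq' Finset.univ (Fin.castLE hd a)
    (fun r => if r = Fin.castLE hd b then (1:𝕜) else 0)]
  by_cases h : a = b <;> simp [h, Matrix.one_apply, Fin.castLE_inj]

lemma trace_sel (𝕜 : Type*) [RCLike 𝕜] {m d : ℕ} (hd : d ≤ m) (v : Fin m → 𝕜) :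
    ((selE 𝕜 hd)ᴴ * Matrix.diagonal v * selE 𝕜 hd).trace = ∑ j : Fin d, v (Fin.castLE hd j) := by
  rw [Matrix.trace]
  refine Finset.sum_congr rfl fun a _ => ?_
  simp only [Matrix.diag_apply, Matrix.mul_apply, Matrix.conjTranspose_apply, selE,
    Matrix.of_apply, Matrix.diagonal_apply, apply_ite (star : 𝕜 → 𝕜), star_one, star_zero, ite_mul, one_mul,
    zero_mul, mul_ite, mul_one, mul_zero, Finset.sum_ite_eq, Finset.sum_ite_eq',
    Finset.mem_univ, if_true]

lemma sel_unitary {𝕜 : Type*} [RCLike 𝕜] {m d : ℕ} (hd : d ≤ m)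
    (U : Matrix (Fin m) (Fin m) 𝕜) (hU : Uᴴ * U = 1) :
    (U * selE 𝕜 hd)ᴴ * (U * selE 𝕜 hd) = 1 := by
  rw [Matrix.conjTranspose_mul, Matrix.mul_assoc, ← Matrix.mul_assoc Uᴴ U, hU, Matrix.one_mul,
    selE_orth]

lemma sel_trace {𝕜 : Type*} [RCLike 𝕜] {m d : ℕ} (hd : d ≤ m)
    (U : Matrix (Fin m) (Fin m) 𝕜) (hU : Uᴴ * U = 1) (v : Fin m → 𝕜) :
    ((U * selE 𝕜 hd)ᴴ * (U * Matrix.diagonal v * Uᴴ) * (U * selE 𝕜 hd)).trace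
      = ∑ j : Fin d, v (Fin.castLE hd j) := by
  have h1 : (U * selE 𝕜 hd)ᴴ * (U * Matrix.diagonal v * Uᴴ) * (U * selE 𝕜 hd)
      = (selE 𝕜 hd)ᴴ * Matrix.diagonal v * selE 𝕜 hd := by
    rw [Matrix.conjTranspose_mul]
    calc (selE 𝕜 hd)ᴴ * Uᴴ * (U * Matrix.diagonal v * Uᴴ) * (U * selE 𝕜 hd)
        = (selE 𝕜 hd)ᴴ * ((Uᴴ * U) * Matrix.diagonal v * (Uᴴ * U)) * selE 𝕜 hd := by
          simp only [Matrix.mul_assoc]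
      _ = (selE 𝕜 hd)ᴴ * Matrix.diagonal v * selE 𝕜 hd := by
          rw [hU, Matrix.one_mul, Matrix.mul_one, Matrix.mul_assoc]
  rw [h1, trace_sel]

lemma slice_lb {m d : ℕ} (hd : d ≤ m) (hd0 : d ≠ 0) (μ : Fin m → ℝ) (hmono : Monotone μ)
    (U : Matrix (Fin m) (Fin m) ℂ) (hU : Uᴴ * U = 1)
    (W : Matrix (Fin m) (Fin d) ℂ) (hW : Wᴴ * W = 1) :
    ∃ s : ℝ, (∑ j : Fin d, μ (Fin.castLE hd j)) ≤ s ∧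
      (Wᴴ * (U * Matrix.diagonal (fun j => (μ j : ℂ)) * Uᴴ) * W).trace = (s : ℂ) := by
  have hU' : U * Uᴴ = 1 := mul_eq_one_comm.mp hU
  set Y := Uᴴ * W with hYdef
  have hY : Yᴴ * Y = 1 := by
    rw [hYdef, Matrix.conjTranspose_mul, Matrix.conjTranspose_conjTranspose, Matrix.mul_assoc,
      ← Matrix.mul_assoc U Uᴴ W, hU', Matrix.one_mul, hW]
  set M := Y * Yᴴ with hMdef
  have hM2 : M * M = M := by
    rw [hMdef, Matrix.mul_assoc, ← Matrix.mul_assoc Yᴴ Y Yᴴ, hY, Matrix.one_mul]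
  have hMH : Mᴴ = M := by
    rw [hMdef, Matrix.conjTranspose_mul, Matrix.conjTranspose_conjTranspose]
  set t : Fin m → ℝ := fun j => ∑ c : Fin d, Complex.normSq (Y j c) with htdef
  have hMjj : ∀ j, M j j = ((t j : ℝ) : ℂ) := by
    intro j
    simp only [hMdef, Matrix.mul_apply, Matrix.conjTranspose_apply, htdef]
    push_cast
    exact Finset.sum_congr rfl fun c _ => by rw [← Complex.mul_conj]; rfl
  have ht0 : ∀ j, 0 ≤ t j := fun j => Finset.sum_nonneg fun c _ => Complex.normSq_nonneg _
  have ht1 : ∀ j, t j ≤ 1 := by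
    intro j
    have h1 : M j j = ∑ k, M j k * ((starRingEnd ℂ) (M j k)) := by
      conv_lhs => rw [← hM2]
      rw [Matrix.mul_apply]
      refine Finset.sum_congr rfl fun k _ => ?_
      congr 1
      have := congrFun (congrFun hMH k) j
      rw [Matrix.conjTranspose_apply] at this
      rw [← this]
      rfl
    have h2 : (t j : ℂ) = ((∑ k, Complex.normSq (M j k) : ℝ) : ℂ) := by
      rw [← hMjj j, h1]
      push_cast
      exact Finset.sum_congr rfl fun k _ => by rw [← Complex.mul_conj]
    have h3 : t j = ∑ k, Complex.normSq (M j k) := by exact_mod_cast h2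
    have h4 : Complex.normSq (M j j) ≤ ∑ k, Complex.normSq (M j k) :=
      Finset.single_le_sum (fun k _ => Complex.normSq_nonneg _) (Finset.mem_univ j)
    rw [hMjj j, Complex.normSq_ofReal] at h4
    nlinarith [ht0 j, h3, h4]
  have htsum : ∑ j, t j = d := by
    have h1 : ((∑ j, t j : ℝ) : ℂ) = Matrix.trace M := by
      rw [Matrix.trace]
      push_cast
      exact (Finset.sum_congr rfl fun j _ => (hMjj j).symm)
    have h2 : Matrix.trace M = (d : ℂ) := by
      rw [hMdef, Matrix.trace_mul_comm, hY, Matrix.trace_one]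
      simp
    rw [h2] at h1
    exact_mod_cast h1
  refine ⟨∑ j, μ j * t j, ?_, ?_⟩
  · -- combinatorial bound
    have hdm : d - 1 < m := lt_of_lt_of_le (Nat.pred_lt hd0) hd
    set c : ℝ := μ ⟨d - 1, hdm⟩ with hcdef
    have key : ∀ j : Fin m, c * (t j - (if (j : ℕ) < d then 1 else 0))
        ≤ μ j * t j - (if (j : ℕ) < d then μ j else 0) := by
      intro j
      by_cases hj : (j : ℕ) < d
      · simp only [if_pos hj]
        have hle : μ j ≤ c := hmono (by simp [Fin.le_def]; omega)
        nlinarith [ht1 j]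
      · simp only [if_neg hj]
        have hle : c ≤ μ j := hmono (by simp [Fin.le_def]; omega)
        nlinarith [ht0 j]
    have hsum := Finset.sum_le_sum (fun j (_ : j ∈ Finset.univ) => key j)
    have hA : ∑ j : Fin m, c * (t j - (if (j : ℕ) < d then 1 else 0)) = 0 := by
      rw [← Finset.mul_sum, Finset.sum_sub_distrib, htsum]
      have : ∑ j : Fin m, (if (j : ℕ) < d then (1:ℝ) else 0) = d := by
        rw [Fin.sum_univ_eq_sum_range (fun j => if j < d then (1:ℝ) else 0), ← Finset.sum_filter]
        have hfil : Finset.filter (fun j => j < d) (Finset.range m) = Finset.range d := by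
          ext j; simp; omega
        rw [hfil]
        simp
      rw [this]
      ring
    have hB : ∑ j : Fin m, (μ j * t j - (if (j : ℕ) < d then μ j else 0))
        = (∑ j, μ j * t j) - ∑ j : Fin d, μ (Fin.castLE hd j) := by
      rw [Finset.sum_sub_distrib]
      congr 1
      rw [← Finset.sum_filter]
      refine Finset.sum_bij' (fun (j : Fin m) (hj : j ∈ Finset.filter (fun (j : Fin m) => (j:ℕ) < d) Finset.univ)
        => (⟨(j:ℕ), (Finset.mem_filter.mp hj).2⟩ : Fin d))
        (fun (j : Fin d) _ => Fin.castLE hd j) ?_ ?_ ?_ ?_ ?_ <;> intro j hj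
      all_goals first
        | exact Finset.mem_univ _
        | simp [Fin.is_lt]
        | (exact Fin.ext rfl)
        | (congr 1; exact Fin.ext rfl)
        | rfl
    rw [hA, hB] at hsum
    linarith
  · -- trace identity
    have h1 : Wᴴ * (U * Matrix.diagonal (fun j => (μ j : ℂ)) * Uᴴ) * W
        = Yᴴ * Matrix.diagonal (fun j => (μ j : ℂ)) * Y := by
      rw [hYdef, Matrix.conjTranspose_mul, Matrix.conjTranspose_conjTranspose]
      simp only [Matrix.mul_assoc]
    rw [h1, Matrix.trace_mul_comm, ← Matrix.mul_assoc, ← hMdef]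
    rw [Matrix.trace]
    push_cast
    refine Finset.sum_congr rfl fun j _ => ?_
    rw [Matrix.diag_apply, Matrix.mul_diagonal, hMjj j]
    push_cast
    ring



lemma map_ofReal_mul {a b c : ℕ} (M : Matrix (Fin a) (Fin b) ℝ) (N : Matrix (Fin b) (Fin c) ℝ) :
    (M * N).map (fun x : ℝ => (x : ℂ)) = M.map (fun x : ℝ => (x : ℂ)) * N.map (fun x : ℝ => (x : ℂ)) :=
  Matrix.map_mul (f := Complex.ofRealHom)

lemma map_ofReal_conjTranspose {a b : ℕ} (M : Matrix (Fin a) (Fin b) ℝ) :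
    (M.map (fun x : ℝ => (x : ℂ)))ᴴ = Mᴴ.map (fun x : ℝ => (x : ℂ)) :=
  (Matrix.conjTranspose_map (fun x : ℝ => (x : ℂ)) (fun x => by simp [Complex.conj_ofReal])).symm

lemma map_ofReal_one {a : ℕ} : (1 : Matrix (Fin a) (Fin a) ℝ).map (fun x : ℝ => (x : ℂ)) = 1 :=
  Matrix.map_one _ (by simp) (by simp)

lemma real_slice {m d : ℕ} (hd : d ≤ m) (Ahat : Matrix (Fin m) (Fin m) ℂ)
    (hself : Ahat.map (starRingEnd ℂ) = Ahat) (hherm : Ahat.IsHermitian)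
    (μ' : Fin m → ℝ) (hmono : Monotone μ')
    (U : Matrix (Fin m) (Fin m) ℂ) (hU : Uᴴ * U = 1)
    (hAU : Ahat = U * Matrix.diagonal (fun j => (μ' j : ℂ)) * Uᴴ) :
    ∃ W : Matrix (Fin m) (Fin d) ℂ, W.map (starRingEnd ℂ) = W ∧ Wᴴ * W = 1 ∧
      (Wᴴ * Ahat * W).trace = ((∑ j : Fin d, μ' (Fin.castLE hd j) : ℝ) : ℂ) := by
  classical
  set B : Matrix (Fin m) (Fin m) ℝ := Matrix.of fun r c => (Ahat r c).re with hBdef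
  have hBmap : B.map (fun x : ℝ => (x : ℂ)) = Ahat := by
    ext r c
    have := congrFun (congrFun hself r) c
    rw [Matrix.map_apply] at this
    simpa [hBdef, Matrix.map_apply] using Complex.conj_eq_iff_re.mp this
  have hBH : B.IsHermitian := by
    ext r c
    have := congrFun (congrFun hherm.eq r) c
    rw [Matrix.conjTranspose_apply] at this
    simp only [hBdef, Matrix.conjTranspose_apply, Matrix.of_apply, star_trivial]
    rw [← this]
    simp [RCLike.star_def]
  set V : Matrix (Fin m) (Fin m) ℝ := (hBH.eigenvectorUnitary : Matrix (Fin m) (Fin m) ℝ) with hVdef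
  have hV : Vᴴ * V = 1 := by
    have := hBH.eigenvectorUnitary.prop
    rw [Unitary.mem_iff] at this
    simpa [Matrix.star_eq_conjTranspose] using this.1
  set e : Fin m → ℝ := hBH.eigenvalues with hedef
  have hspec' : B = V * Matrix.diagonal e * Vᴴ := by
    have := hBH.spectral_theorem
    rw [Unitary.conjStarAlgAut_apply, RCLike.ofReal_real_eq_id, Function.id_comp, Matrix.star_eq_conjTranspose] at this
    exact this
  set σ : Equiv.Perm (Fin m) := Tuple.sort e with hσdef
  have hmono2 : Monotone (e ∘ σ) := Tuple.monotone_sort e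
  set Q : Matrix (Fin m) (Fin m) ℝ := V.submatrix id σ with hQdef
  have hQ : Qᴴ * Q = 1 := by
    rw [hQdef, Matrix.conjTranspose_submatrix,
      ← Matrix.submatrix_mul Vᴴ V (⇑σ) id (⇑σ) Function.bijective_id, hV,
      Matrix.submatrix_one _ σ.injective]
  have hBQ : B = Q * Matrix.diagonal (e ∘ σ) * Qᴴ := by
    rw [hQdef, Matrix.conjTranspose_submatrix, ← Matrix.submatrix_diagonal_equiv e σ,
      ← Matrix.submatrix_mul V (Matrix.diagonal e) id (⇑σ) (⇑σ) σ.bijective,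
      ← Matrix.submatrix_mul (V * Matrix.diagonal e) Vᴴ id (⇑σ) id σ.bijective,
      Matrix.submatrix_id_id, hspec']
  -- complex versions
  set Qc : Matrix (Fin m) (Fin m) ℂ := Q.map (fun x : ℝ => (x : ℂ)) with hQcdef
  have hQc : Qcᴴ * Qc = 1 := by
    rw [hQcdef, map_ofReal_conjTranspose, ← map_ofReal_mul, hQ, map_ofReal_one]
  have hdiagmap : (Matrix.diagonal (e ∘ σ)).map (fun x : ℝ => (x : ℂ))
      = Matrix.diagonal (fun j => ((e (σ j) : ℝ) : ℂ)) := by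
    rw [Matrix.diagonal_map (by simp)]
    rfl
  have hAQ : Ahat = Qc * Matrix.diagonal (fun j => ((e (σ j) : ℝ) : ℂ)) * Qcᴴ := by
    rw [← hBmap, hBQ, map_ofReal_mul, map_ofReal_mul, hdiagmap, map_ofReal_conjTranspose, hQcdef]
  -- equality of sorted eigenvalues
  have heq : (fun j => e (σ j)) = μ' := by
    refine mono_eq_of_unitary_diag _ _ hmono2 hmono Qc U hQc hU ?_
    rw [← hAQ, hAU]
  -- the slice
  refine ⟨(Q * selE ℝ hd).map (fun x : ℝ => (x : ℂ)), ?_, ?_, ?_⟩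
  · ext r c
    simp [Matrix.map_apply, Complex.conj_ofReal]
  · rw [map_ofReal_conjTranspose, ← map_ofReal_mul, sel_unitary hd Q hQ, map_ofReal_one]
  · have hR : ((Q * selE ℝ hd)ᴴ * (Q * Matrix.diagonal (e ∘ σ) * Qᴴ) * (Q * selE ℝ hd)).trace
        = ∑ j : Fin d, (e ∘ σ) (Fin.castLE hd j) := sel_trace hd Q hQ (e ∘ σ)
    rw [map_ofReal_conjTranspose, ← hBmap, hBQ]
    rw [← map_ofReal_mul, ← map_ofReal_mul]
    have htr : ∀ (M : Matrix (Fin d) (Fin d) ℝ),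
        (M.map (fun x : ℝ => (x : ℂ))).trace = ((M.trace : ℝ) : ℂ) := by
      intro M
      simp [Matrix.trace, Matrix.map_apply]
    rw [htr, hR]
    congr 1
    rw [← heq]
    rfl




lemma dft3_neg {m n p : ℕ} (hp : p ≠ 0) (A : Fin p → Matrix (Fin m) (Fin n) ℝ) (k : Fin p) :
    dft3 A (-k) = (dft3 A k).map (starRingEnd ℂ) := by
  ext r c
  simp only [dft3, Matrix.sum_apply, Matrix.smul_apply, Matrix.map_apply, smul_eq_mul, map_sum,
    _root_.map_mul, Complex.conj_ofReal]
  refine Finset.sum_congr rfl fun l _ => ?_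
  congr 1
  exact (conj_tOmega_fin' hp (l:ℕ) k).symm

lemma idft_dft {m n p : ℕ} (hp : p ≠ 0) (X : Fin p → Matrix (Fin m) (Fin n) ℝ)
    (l : Fin p) (r : Fin m) (c : Fin n) :
    (p:ℂ)⁻¹ * ∑ k : Fin p, (starRingEnd ℂ) (tOmega p ^ ((k:ℕ)*(l:ℕ))) * (dft3 X k) r c
      = ((X l r c : ℝ) : ℂ) := by
  haveI := NeZero.mk hp
  simp only [dft3, Matrix.sum_apply, Matrix.smul_apply, Matrix.map_apply, smul_eq_mul]
  trans ((p:ℂ)⁻¹ * ∑ k : Fin p, ∑ s : Fin p,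
      tOmega p ^ ((k:ℕ)*((s - l : Fin p):ℕ)) * ((X s r c : ℝ):ℂ))
  · congr 1
    refine Finset.sum_congr rfl fun k _ => ?_
    rw [Finset.mul_sum]
    refine Finset.sum_congr rfl fun s _ => ?_
    rw [conj_tOmega_fin hp (k:ℕ) l, ← mul_assoc, ← tOmega_fin_add hp (k:ℕ) (-l) s]
    congr 3
    rw [add_comm, ← sub_eq_add_neg]
  · rw [Finset.sum_comm]
    have : ∀ s : Fin p, (∑ k : Fin p, tOmega p ^ ((k:ℕ)*((s - l : Fin p):ℕ)) * ((X s r c : ℝ):ℂ))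
        = (if ((s - l : Fin p):ℕ) = 0 then (p:ℂ) else 0) * ((X s r c : ℝ):ℂ) := by
      intro s
      rw [← Finset.sum_mul, tOmega_geom hp]
    simp_rw [this]
    rw [Finset.sum_eq_single l]
    · simp
      field_simp
    · intro s _ hs
      have : ¬ ((s - l : Fin p):ℕ) = 0 := by
        intro h0
        exact hs (by
          have : (s - l : Fin p) = 0 := Fin.ext h0
          have := sub_eq_zero.mp this
          exact this)
      rw [if_neg this, zero_mul]
    · simp

lemma dft3_inj {m n p : ℕ} (hp : p ≠ 0) (X Z : Fin p → Matrix (Fin m) (Fin n) ℝ)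
    (h : ∀ k, dft3 X k = dft3 Z k) : X = Z := by
  funext l
  ext r c
  have h1 := idft_dft hp X l r c
  have h2 := idft_dft hp Z l r c
  apply Complex.ofReal_injective
  rw [← h1, ← h2]
  simp_rw [h]

lemma conjm_mul {a b c : ℕ} (M : Matrix (Fin a) (Fin b) ℂ) (N : Matrix (Fin b) (Fin c) ℂ) :
    (M * N).map (starRingEnd ℂ) = M.map (starRingEnd ℂ) * N.map (starRingEnd ℂ) :=
  Matrix.map_mul (f := starRingEnd ℂ)

lemma conjm_ct {a b : ℕ} (M : Matrix (Fin a) (Fin b) ℂ) :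
    (Mᴴ).map (starRingEnd ℂ) = (M.map (starRingEnd ℂ))ᴴ :=
  Matrix.conjTranspose_map (starRingEnd ℂ) (fun x => by simp [RCLike.star_def])

lemma conjm_one {a : ℕ} : (1 : Matrix (Fin a) (Fin a) ℂ).map (starRingEnd ℂ) = 1 :=
  Matrix.map_one _ (map_zero _) (map_one _)

lemma conjm_conjm {a b : ℕ} (M : Matrix (Fin a) (Fin b) ℂ) :
    (M.map (starRingEnd ℂ)).map (starRingEnd ℂ) = M := by
  ext r c; simp

lemma conjm_diag_real {a : ℕ} (v : Fin a → ℝ) :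
    (Matrix.diagonal (fun j => ((v j : ℝ) : ℂ))).map (starRingEnd ℂ)
      = Matrix.diagonal (fun j => ((v j : ℝ) : ℂ)) := by
  rw [Matrix.diagonal_map (map_zero _)]
  congr 1
  funext j
  simp [Complex.conj_ofReal]

lemma trace_conjm {a : ℕ} (M : Matrix (Fin a) (Fin a) ℂ) :
    (M.map (starRingEnd ℂ)).trace = (starRingEnd ℂ) M.trace := by
  simp [Matrix.trace, Matrix.map_apply]


/-- Tensor trace minimization: for an f-symmetric f-positive-semidefinite tensor A,
    min over V with V^T * V = I of Trace_f(V^T * A * V) = (1/p) Σ_i Σ_{j<d} λ̃_j(Â_i). -/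
theorem tensor_trace_min (m d p : ℕ) (hd : d ≤ m)
    (A : Fin p → Matrix (Fin m) (Fin m) ℝ)
    (hsym : ∀ i, (dft3 A i).IsHermitian)
    (hpsd : ∀ i, (dft3 A i).PosSemidef)
    (μ : Fin p → Fin m → ℝ)
    (hmono : ∀ i, Monotone (μ i))
    (hspec : ∀ i, ∃ U : Matrix (Fin m) (Fin m) ℂ, Uᴴ * U = 1 ∧
        dft3 A i = U * Matrix.diagonal (fun j => (μ i j : ℂ)) * Uᴴ) :
    IsLeast { t : ℝ | ∃ V : Fin p → Matrix (Fin m) (Fin d) ℝ,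
        tProd (tTrans V) V = tId d p ∧
        tTraceF (tProd (tTrans V) (tProd A V)) = (t : ℂ) }
      ((1 / (p : ℝ)) * ∑ i : Fin p, ∑ j : Fin d, μ i (Fin.castLE hd j)) := by
  by_cases hp : p = 0
  · subst hp
    constructor
    · refine ⟨fun _ => 0, funext fun k => k.elim0, ?_⟩
      simp [tTraceF]
    · rintro t ⟨V, -, htr⟩
      have h0 : (t : ℂ) = 0 := by rw [← htr]; simp [tTraceF]
      have : t = 0 := by exact_mod_cast h0
      simp [this]
  haveI := NeZero.mk hp
  choose U hU hAU using hspec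
  have mu_neg : ∀ i, μ (-i) = μ i := by
    intro i
    refine mono_eq_of_unitary_diag (μ (-i)) (μ i) (hmono _) (hmono _)
      ((U (-i)).map (starRingEnd ℂ)) (U i) ?_ (hU i) ?_
    · rw [← conjm_ct, ← conjm_mul, hU (-i), conjm_one]
    · rw [← hAU i]
      have h1 : dft3 A i = (dft3 A (-i)).map (starRingEnd ℂ) := by
        have := dft3_neg hp A (-i)
        rwa [neg_neg] at this
      rw [h1, hAU (-i), conjm_mul, conjm_mul, conjm_diag_real, conjm_ct]
  have slices : ∀ i, ∃ W : Matrix (Fin m) (Fin d) ℂ,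
      ((-i = i) → W.map (starRingEnd ℂ) = W) ∧ Wᴴ * W = 1 ∧
      (Wᴴ * dft3 A i * W).trace = ((∑ j : Fin d, μ i (Fin.castLE hd j) : ℝ) : ℂ) := by
    intro i
    by_cases hii : -i = i
    · have hself : (dft3 A i).map (starRingEnd ℂ) = dft3 A i := by
        have := (dft3_neg hp A i).symm
        rwa [hii] at this
      obtain ⟨W, h1, h2, h3⟩ := real_slice hd (dft3 A i) hself (hsym i) (μ i) (hmono i)
        (U i) (hU i) (hAU i)
      exact ⟨W, fun _ => h1, h2, h3⟩
    · refine ⟨U i * selE ℂ hd, fun h => absurd h hii, sel_unitary hd (U i) (hU i), ?_⟩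
      conv_lhs => rw [hAU i]
      rw [sel_trace hd (U i) (hU i)]
      push_cast
      rfl
  choose W0 hW0real hW0orth hW0tr using slices
  set Wh : Fin p → Matrix (Fin m) (Fin d) ℂ :=
    fun k => if (k:ℕ) ≤ ((-k : Fin p):ℕ) then W0 k else (W0 (-k)).map (starRingEnd ℂ)
    with hWhdef
  have hWhconj : ∀ k, Wh (-k) = (Wh k).map (starRingEnd ℂ) := by
    intro k
    by_cases h1 : (k:ℕ) ≤ ((-k : Fin p):ℕ)
    · by_cases heq : -k = k
      · have hr := hW0real k heq
        simp only [hWhdef, heq]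
        rw [if_pos le_rfl, hr]
      · have h2 : ¬ ((-k:Fin p):ℕ) ≤ ((-(-k):Fin p):ℕ) := by
          rw [neg_neg]
          have hne : ((-k:Fin p):ℕ) ≠ (k:ℕ) := fun h => heq (Fin.ext h)
          omega
        simp only [hWhdef]
        rw [if_neg h2, if_pos h1, neg_neg]
    · have h2 : ((-k:Fin p):ℕ) ≤ ((-(-k):Fin p):ℕ) := by rw [neg_neg]; omega
      simp only [hWhdef]
      rw [if_pos h2, if_neg h1, conjm_conjm]
  have hWhorth : ∀ k, (Wh k)ᴴ * Wh k = 1 := by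
    intro k
    by_cases h1 : (k:ℕ) ≤ ((-k : Fin p):ℕ)
    · simp only [hWhdef]; rw [if_pos h1]; exact hW0orth k
    · simp only [hWhdef]; rw [if_neg h1, ← conjm_ct, ← conjm_mul, hW0orth (-k), conjm_one]
  have hWhtr : ∀ k, ((Wh k)ᴴ * dft3 A k * Wh k).trace
      = ((∑ j : Fin d, μ k (Fin.castLE hd j) : ℝ) : ℂ) := by
    intro k
    by_cases h1 : (k:ℕ) ≤ ((-k : Fin p):ℕ)
    · simp only [hWhdef]; rw [if_pos h1]; exact hW0tr k
    · simp only [hWhdef]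
      rw [if_neg h1]
      have hAk : dft3 A k = (dft3 A (-k)).map (starRingEnd ℂ) := by
        have := dft3_neg hp A (-k); rwa [neg_neg] at this
      rw [hAk, ← conjm_ct, ← conjm_mul, ← conjm_mul, trace_conjm, hW0tr (-k), mu_neg k]
      exact Complex.conj_ofReal _
  constructor
  · set Vt : Fin p → Matrix (Fin m) (Fin d) ℝ := fun l => Matrix.of fun r c =>
      ((p : ℂ)⁻¹ * ∑ k : Fin p, (starRingEnd ℂ) (tOmega p ^ ((k:ℕ)*(l:ℕ))) * Wh k r c).re
      with hVtdef
    have hV : ∀ k, dft3 Vt k = Wh k := by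
      intro k
      rw [hVtdef]
      exact dft3_inverse hp Wh hWhconj k
    refine ⟨Vt, ?_, ?_⟩
    · apply dft3_inj hp
      intro k
      rw [dft3_tProd hp, dft3_tTrans hp, hV k, hWhorth k, dft3_tId hp]
    · rw [tTraceF]
      have htr : ∀ i, (dft3 (tProd (tTrans Vt) (tProd A Vt)) i).trace
          = ((∑ j : Fin d, μ i (Fin.castLE hd j) : ℝ) : ℂ) := by
        intro i
        rw [dft3_tProd hp, dft3_tTrans hp, dft3_tProd hp, hV i, ← Matrix.mul_assoc]
        exact hWhtr i
      simp_rw [htr]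
      push_cast
      ring
  · rintro t ⟨V, hcon, htr⟩
    have hVo : ∀ k, (dft3 V k)ᴴ * dft3 V k = 1 := by
      intro k
      have h2 : dft3 (tProd (tTrans V) V) k = dft3 (tId d p) k := by rw [hcon]
      rwa [dft3_tProd hp, dft3_tTrans hp, dft3_tId hp] at h2
    by_cases hd0 : d = 0
    · subst hd0
      have h0 : (t : ℂ) = 0 := by
        rw [← htr, tTraceF]
        have hz : ∀ i, (dft3 (tProd (tTrans V) (tProd A V)) i).trace = 0 := by
          intro i
          rw [Matrix.trace]
          simp
        simp [hz]
      have ht0 : t = 0 := by exact_mod_cast h0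
      simp [ht0]
    · have hs : ∀ i, ∃ s : ℝ, (∑ j : Fin d, μ i (Fin.castLE hd j)) ≤ s ∧
          ((dft3 V i)ᴴ * dft3 A i * dft3 V i).trace = (s : ℂ) := by
        intro i
        have := slice_lb hd hd0 (μ i) (hmono i) (U i) (hU i) (dft3 V i) (hVo i)
        rwa [← hAU i] at this
      choose s hsle hstr using hs
      have ht : t = (1/(p:ℝ)) * ∑ i, s i := by
        apply Complex.ofReal_injective
        rw [← htr, tTraceF]
        have htr2 : ∀ i, (dft3 (tProd (tTrans V) (tProd A V)) i).trace = ((s i : ℝ) : ℂ) := by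
          intro i
          rw [dft3_tProd hp, dft3_tTrans hp, dft3_tProd hp, ← Matrix.mul_assoc]
          exact hstr i
        simp_rw [htr2]
        push_cast
        ring
      rw [ht]
      have h1 : (0:ℝ) ≤ 1/(p:ℝ) := by positivity
      exact mul_le_mul_of_nonneg_left (Finset.sum_le_sum fun i _ => hsle i) h1
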